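/- Let p > 3 be prime, and suppose the point G = (x_G, y_G) lies on the nonsingular curve E : y² = x³ + Ax + B over 𝔽_p. Then the vector e = (x_G, x_G², A, B, y_G², x_G³)ᵀ ∈ 𝔽_p⁶ satisfies the linear system C·e = u, where for i = 2,…,6 the i-th row of C is (2x_i² + 2x_i(x_{i−1}+x_{i+1}), 2x_i − (x_{i−1}+x_{i+1}), 2x_i, 2, 2, −2) and the i-th entry of u is (x_{i−1}+x_{i+1})x_i², provided x_n = x(nG ⊕ W₀) for some W₀ ∈ E(𝔽_p) with W_n ≠ ±G and W_n ≠ 𝒪 for the relevant indices n = 1,…,7. -/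

import Mathlib

/-- The elliptic curve `y² = x³ + Ax + B` in affine Weierstrass form. -/
def Ecurve {k : Type*} [CommRing k] (A B : k) : WeierstrassCurve.Affine k :=
  { a₁ := 0, a₂ := 0, a₃ := 0, a₄ := A, a₆ := B }

/-- The x-coordinate of a nonsingular point, with the convention `x(𝒪) = 0`. -/
def xcoord {k : Type*} [Field k] {W : WeierstrassCurve.Affine k} : W.Point → k
  | .zero => 0
  | @WeierstrassCurve.Affine.Point.some _ _ _ x _ _ => x

open WeierstrassCurve.Affine

lemma xcoord_some {k : Type*} [Field k] {W : WeierstrassCurve.Affine k} {x y : k}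
    (h : W.Nonsingular x y) : xcoord (Point.some _ _ h) = x := rfl

lemma sum_x_lemma (p : ℕ) [Fact p.Prime] (A B x_G y_G x y : ZMod p)
    (hGns : (Ecurve A B).Nonsingular x_G y_G)
    (hW : (Ecurve A B).Nonsingular x y) (hx : x ≠ x_G) :
    (x - x_G)^2 * (xcoord (Point.some _ _ hW + Point.some _ _ hGns)
      + xcoord (Point.some _ _ hW + -Point.some _ _ hGns))
      = 2 * ((x * x_G + A) * (x + x_G) + 2 * B) := by
  have hy : y ^ 2 = x ^ 3 + A * x + B := by
    have := (equation_iff (W := Ecurve A B) x y).mp hW.left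
    simpa [Ecurve] using this
  have hyG : y_G ^ 2 = x_G ^ 3 + A * x_G + B := by
    have := (equation_iff (W := Ecurve A B) x_G y_G).mp hGns.left
    simpa [Ecurve] using this
  rw [Point.neg_some, Point.add_of_X_ne hx, Point.add_of_X_ne hx]
  show (x - x_G)^2 * ((Ecurve A B).addX x x_G ((Ecurve A B).slope x x_G y y_G)
    + (Ecurve A B).addX x x_G ((Ecurve A B).slope x x_G y ((Ecurve A B).negY x_G y_G))) = _
  rw [slope_of_X_ne hx, slope_of_X_ne hx]
  simp only [addX, negY, Ecurve]
  have h := sub_ne_zero.mpr hx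
  field_simp
  linear_combination 2 * hy + 2 * hyG

lemma row_lemma (p : ℕ) [Fact p.Prime] (A B x_G y_G : ZMod p)
    (hGns : (Ecurve A B).Nonsingular x_G y_G)
    (G : (Ecurve A B).Point) (hGdef : G = Point.some _ _ hGns)
    (Wm W Wp : (Ecurve A B).Point)
    (hWp : Wp = W + G) (hWm : Wm = W - G)
    (h1 : W ≠ G) (h2 : W ≠ -G) (h0 : W ≠ 0) :
    (2 * (xcoord W)^2 + 2 * (xcoord W) * (xcoord Wm + xcoord Wp)) * x_G
      + (2 * (xcoord W) - (xcoord Wm + xcoord Wp)) * x_G^2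
      + 2 * (xcoord W) * A + 2 * B + 2 * y_G^2 + (-2) * x_G^3
      = (xcoord Wm + xcoord Wp) * (xcoord W)^2 := by
  cases W with
  | zero => exact absurd rfl h0
  | @some x y hW =>
    subst hWp hWm hGdef
    have hy : y ^ 2 = x ^ 3 + A * x + B := by
      have := (equation_iff (W := Ecurve A B) x y).mp hW.left
      simpa [Ecurve] using this
    have hyG : y_G ^ 2 = x_G ^ 3 + A * x_G + B := by
      have := (equation_iff (W := Ecurve A B) x_G y_G).mp hGns.left
      simpa [Ecurve] using this
    have hx : x ≠ x_G := by
      rintro rfl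
      have hsq : (y - y_G) * (y + y_G) = 0 := by linear_combination hy - hyG
      rcases mul_eq_zero.mp hsq with h | h
      · obtain rfl : y = y_G := by linear_combination h
        exact h1 rfl
      · have hy' : y = (Ecurve A B).negY x y_G := by
          simp only [negY, Ecurve]
          linear_combination h
        subst hy'
        exact h2 (by rw [Point.neg_some])
    have hs := sum_x_lemma p A B x_G y_G x y hGns hW hx
    rw [sub_eq_add_neg, xcoord_some]
    linear_combination -hs + 2 * hyG

/-- Congruence (7) of the paper in matrix form: the vector
`e = (x_G, x_G², A, B, y_G², x_G³)` solves the linear system `C·e = u`, where for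
`i = 2,…,6` the `i`-th row of `C` is
`(2x_i² + 2x_i(x_{i−1}+x_{i+1}), 2x_i − (x_{i−1}+x_{i+1}), 2x_i, 2, 2, −2)` and the
`i`-th entry of `u` is `(x_{i−1}+x_{i+1})x_i²`, with `x_n = x(nG ⊕ W₀)`, `Wₙ ≠ ±G` and
`Wₙ ≠ 𝒪` for `n = 1,…,7`. -/
theorem stmt13 (p : ℕ) [Fact p.Prime] (hp : 3 < p)
    (A B x_G y_G : ZMod p)
    (hΔ : 4 * A ^ 3 + 27 * B ^ 2 ≠ 0)
    (hGns : (Ecurve A B).Nonsingular x_G y_G)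
    (G W₀ : (Ecurve A B).Point)
    (hGdef : G = WeierstrassCurve.Affine.Point.some _ _ hGns)
    (Wn : ℕ → (Ecurve A B).Point) (hWn : ∀ n, Wn n = n • G + W₀)
    (xs : ℕ → ZMod p) (hxs : ∀ n, xs n = xcoord (Wn n))
    (hG : ∀ n, 1 ≤ n → n ≤ 7 → Wn n ≠ G ∧ Wn n ≠ -G)
    (hO : ∀ n, 1 ≤ n → n ≤ 7 → Wn n ≠ 0)
    (C : Matrix (Fin 5) (Fin 6) (ZMod p))
    (hC : C = Matrix.of fun i : Fin 5 =>
      ![2 * xs ((i : ℕ) + 2) ^ 2 +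
          2 * xs ((i : ℕ) + 2) * (xs ((i : ℕ) + 1) + xs ((i : ℕ) + 3)),
        2 * xs ((i : ℕ) + 2) - (xs ((i : ℕ) + 1) + xs ((i : ℕ) + 3)),
        2 * xs ((i : ℕ) + 2), 2, 2, -2])
    (u : Fin 5 → ZMod p)
    (hu : u = fun i : Fin 5 => (xs ((i : ℕ) + 1) + xs ((i : ℕ) + 3)) * xs ((i : ℕ) + 2) ^ 2) :
    C.mulVec ![x_G, x_G ^ 2, A, B, y_G ^ 2, x_G ^ 3] = u := by
  have row' : ∀ n : ℕ, n ≤ 4 →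
      (2 * xs (n+2) ^ 2 + 2 * xs (n+2) * (xs (n+1) + xs (n+3))) * x_G
        + (2 * xs (n+2) - (xs (n+1) + xs (n+3))) * x_G^2
        + 2 * xs (n+2) * A + 2 * B + 2 * y_G^2 + (-2) * x_G^3
        = (xs (n+1) + xs (n+3)) * xs (n+2)^2 := by
    intro n hn
    have hWp : Wn (n+3) = Wn (n+2) + G := by
      rw [hWn, hWn, show n + 3 = (n+2) + 1 by omega]
      simp only [succ_nsmul]
      abel
    have hWm : Wn (n+1) = Wn (n+2) - G := by
      rw [eq_sub_iff_add_eq, hWn, hWn, show n + 2 = (n+1) + 1 by omega]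
      simp only [succ_nsmul]
      abel
    rw [hxs (n+1), hxs (n+2), hxs (n+3)]
    exact row_lemma p A B x_G y_G hGns G hGdef _ _ _ hWp hWm
      (hG (n+2) (by omega) (by omega)).1 (hG (n+2) (by omega) (by omega)).2
      (hO (n+2) (by omega) (by omega))
  funext i
  subst hC hu
  fin_cases i <;>
    simp only [Matrix.mulVec, dotProduct, Fin.sum_univ_six, Matrix.of_apply, Fin.isValue,
      Matrix.cons_val_zero, Matrix.cons_val_one, Matrix.head_cons, Matrix.cons_val_two,
      Matrix.tail_cons, Matrix.cons_val_three, Matrix.cons_val_four,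
      show ((5 : Fin 6) : Fin 6) = (4 : Fin 5).succ from rfl, Matrix.cons_val_succ] <;>
    norm_num <;>
    [linear_combination row' 0 (by norm_num); linear_combination row' 1 (by norm_num);
     linear_combination row' 2 (by norm_num); linear_combination row' 3 (by norm_num);
     linear_combination row' 4 (by norm_num)]
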